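/- arXiv:2406.07095 — 8 statements merged into one kernel-verified Lean document; each statement's English description precedes it below -/
import Mathlib

section
/- In a quasi-forest, every path whose intermediate elements are all unnamed (not roots) and whose first and last elements are roots is a basic path: precisely, if ρ = a·ρ̄·b where a, b are roots and ρ̄ is a (possibly empty) sequence of non-root elements, then either ρ̄ is empty (ρ is direct), or all elements of ρ̄ are descendants of a and b = a (roundtrip), or all elements of ρ̄ are descendants of a and b is a nominal root (inout), or all elements of ρ̄ are descendants of b and a is a nominal root (outin), or there is a root c such that all elements of ρ̄ are descendants of c and both a and b are nominal roots (bypass). -/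
def NForest (F : Set (List ℕ)) : Prop :=
  (∀ w ∈ F, w ≠ []) ∧ ∀ w ∈ F, ∀ u : List ℕ, u ≠ [] → u <+: w → u ∈ F

def StrictPrefix (u w : List ℕ) : Prop := u <+: w ∧ u ≠ w

def RootsSet (F : Set (List ℕ)) : Set (List ℕ) := {w ∈ F | w.length = 1}

def IsChild (d e : List ℕ) : Prop := ∃ n : ℕ, e = d ++ [n]

def EdgeCond (F O : Set (List ℕ)) (E : List ℕ → List ℕ → Prop) : Prop :=
  ∀ d e, d ∈ F → e ∈ F → E d e →
    (d ∈ RootsSet F ∧ e ∈ RootsSet F) ∨ d ∈ O ∨ e ∈ O ∨ d = e ∨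
      IsChild d e ∨ IsChild e d

section Aux

variable {F O : Set (List ℕ)} {E : List ℕ → List ℕ → Prop}

lemma aux_len (hF : NForest F) {x : List ℕ} (hx : x ∈ F) (hnx : x ∉ RootsSet F) :
    2 ≤ x.length := by
  have h0 : x ≠ [] := hF.1 x hx
  have h1 : x.length ≠ 1 := fun h => hnx ⟨hx, h⟩
  have : x.length ≠ 0 := fun h => h0 (List.length_eq_zero_iff.mp h)
  omega

lemma aux_take1 (hF : NForest F) {x : List ℕ} (hx : x ∈ F) (h2 : 2 ≤ x.length) :
    x.take 1 ∈ RootsSet F ∧ StrictPrefix (x.take 1) x := by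
  have hpre : x.take 1 <+: x := List.take_prefix 1 x
  have hlen : (x.take 1).length = 1 := by
    rw [List.length_take]; omega
  have hne : x.take 1 ≠ [] := by
    intro h; rw [h] at hlen; simp at hlen
  have hmem : x.take 1 ∈ F := hF.2 x hx _ hne hpre
  have hneq : x.take 1 ≠ x := by
    intro h; rw [h] at hlen; omega
  exact ⟨⟨hmem, hlen⟩, hpre, hneq⟩

lemma aux_step (hF : NForest F) (hO : O ⊆ RootsSet F) (hE : EdgeCond F O E)
    {d e : List ℕ} (hd : d ∈ F) (he : e ∈ F) (hde : E d e)
    (hnd : d ∉ RootsSet F) (hne : e ∉ RootsSet F) : d.take 1 = e.take 1 := by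
  have hdl : d ≠ [] := hF.1 d hd
  rcases hE d e hd he hde with ⟨h1, _⟩ | h | h | h | ⟨n, h⟩ | ⟨n, h⟩
  · exact absurd h1 hnd
  · exact absurd (hO h) hnd
  · exact absurd (hO h) hne
  · rw [h]
  · rw [h, List.take_append_of_le_length]
    have := hF.1 d hd
    have : d.length ≠ 0 := fun h => this (List.length_eq_zero_iff.mp h)
    omega
  · rw [h, List.take_append_of_le_length]
    have := hF.1 e he
    have : e.length ≠ 0 := fun h => this (List.length_eq_zero_iff.mp h)
    omega

lemma aux_chain (hF : NForest F) (hO : O ⊆ RootsSet F) (hE : EdgeCond F O E) :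
    ∀ (l : List (List ℕ)) (c : List ℕ), List.Chain' E (c :: l) →
      (∀ x ∈ c :: l, x ∈ F) → (∀ x ∈ c :: l, x ∉ RootsSet F) →
      ∀ x ∈ l, x.take 1 = c.take 1 := by
  intro l
  induction l with
  | nil => intro c _ _ _ x hx; simp at hx
  | cons y t ih =>
    intro c hch hmem hnr x hx
    rw [List.Chain', List.isChain_cons_cons] at hch
    have hcy : (y : List ℕ).take 1 = c.take 1 :=
      aux_step (d := c) (e := y) hF hO hE (hmem c (by simp)) (hmem y (by simp)) hch.1
        (hnr c (by simp)) (hnr y (by simp)) |>.symm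
    rcases List.mem_cons.mp hx with rfl | hx
    · exact hcy
    · rw [ih y hch.2 (fun z hz => hmem z (List.mem_cons_of_mem c hz))
        (fun z hz => hnr z (List.mem_cons_of_mem c hz)) x hx]
      exact hcy

end Aux

/-- Observation: in a quasi-forest, a path `a · ρ̄ · b` whose interior `ρ̄`
consists of non-roots and whose endpoints `a, b` are roots is basic: it is
direct, a roundtrip, an inout, an outin, or a bypass. -/
theorem stmt5 (F O : Set (List ℕ)) (E : List ℕ → List ℕ → Prop)
    (hF : NForest F) (hO : O ⊆ RootsSet F) (hE : EdgeCond F O E)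
    (a b : List ℕ) (ρ' : List (List ℕ))
    (hpath : List.Chain' E (a :: (ρ' ++ [b])))
    (hmem : ∀ x ∈ a :: (ρ' ++ [b]), x ∈ F)
    (ha : a ∈ RootsSet F) (hb : b ∈ RootsSet F)
    (hint : ∀ x ∈ ρ', x ∉ RootsSet F) :
    ρ' = [] ∨
    ((∀ x ∈ ρ', StrictPrefix a x) ∧ b = a) ∨
    ((∀ x ∈ ρ', StrictPrefix a x) ∧ b ∈ O) ∨
    ((∀ x ∈ ρ', StrictPrefix b x) ∧ a ∈ O) ∨
    (∃ c ∈ RootsSet F, (∀ x ∈ ρ', StrictPrefix c x) ∧ a ∈ O ∧ b ∈ O) := by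
  rcases List.eq_nil_or_concat ρ' with rfl | ⟨t, xl, rfl⟩
  · exact Or.inl rfl
  simp only [List.concat_eq_append] at hpath hmem hint ⊢
  obtain ⟨x0, t0, h0⟩ := List.exists_cons_of_ne_nil (show t ++ [xl] ≠ [] by simp)
  have hmem' : ∀ x ∈ t ++ [xl], x ∈ F := fun x hx => hmem x (by simp at hx ⊢; tauto)
  have hx0mem : x0 ∈ t ++ [xl] := by rw [h0]; simp
  have hxlmem : xl ∈ t ++ [xl] := by simp
  set c := x0.take 1 with hc
  rw [show a :: ((t ++ [xl]) ++ [b]) = (a :: (t ++ [xl])) ++ [b] by simp,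
    List.Chain', List.isChain_append] at hpath
  obtain ⟨hch1, -, hlastb⟩ := hpath
  have hlast : (a :: (t ++ [xl])).getLast? = some xl := by
    rw [show a :: (t ++ [xl]) = (a :: t) ++ [xl] by simp]
    exact List.getLast?_concat
  have hExlb : E xl b := hlastb xl hlast b rfl
  rw [h0, List.isChain_cons_cons] at hch1
  have htake : ∀ x ∈ t ++ [xl], x.take 1 = c := by
    intro x hx
    rw [h0] at hx
    rcases List.mem_cons.mp hx with rfl | hx
    · rfl
    · exact aux_chain hF hO hE t0 x0 hch1.2
        (fun z hz => hmem' z (by rw [h0]; exact hz))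
        (fun z hz => hint z (by rw [h0]; exact hz)) x hx
  have h2 : ∀ x ∈ t ++ [xl], 2 ≤ x.length := fun x hx =>
    aux_len hF (hmem' x hx) (hint x hx)
  have hcroot : c ∈ RootsSet F := (aux_take1 hF (hmem' x0 hx0mem) (h2 x0 hx0mem)).1
  have hsp : ∀ x ∈ t ++ [xl], StrictPrefix c x := by
    intro x hx
    rw [← htake x hx]
    exact (aux_take1 hF (hmem' x hx) (h2 x hx)).2
  have hlen0 : ∀ x ∈ t ++ [xl], x.length ≠ 1 := fun x hx h =>
    hint x hx ⟨hmem' x hx, h⟩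
  have hA : a ∈ O ∨ c = a := by
    have hEax0 : E a x0 := hch1.1
    rcases hE a x0 (hmem a (by simp)) (hmem' x0 hx0mem) hEax0 with
      ⟨-, hr⟩ | h | h | h | ⟨n, h⟩ | ⟨n, h⟩
    · exact absurd hr (hint x0 hx0mem)
    · exact Or.inl h
    · exact absurd (hO h) (hint x0 hx0mem)
    · exact absurd (h ▸ ha) (hint x0 hx0mem)
    · refine Or.inr ?_
      rw [hc, h, List.take_append_of_le_length (le_of_eq ha.2.symm)]
      exact List.take_of_length_le (le_of_eq ha.2)
    · exfalso
      have := h2 x0 hx0mem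
      have hla : a.length = x0.length + 1 := by rw [h]; simp
      have := ha.2
      omega
  have hB : b ∈ O ∨ c = b := by
    rcases hE xl b (hmem' xl hxlmem) (hmem b (by simp)) hExlb with
      ⟨hr, -⟩ | h | h | h | ⟨n, h⟩ | ⟨n, h⟩
    · exact absurd hr (hint xl hxlmem)
    · exact absurd (hO h) (hint xl hxlmem)
    · exact Or.inl h
    · exact absurd (h ▸ hb) (hint xl hxlmem)
    · exfalso
      have := h2 xl hxlmem
      have hlb : b.length = xl.length + 1 := by rw [h]; simp
      have := hb.2
      omega
    · refine Or.inr ?_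
      rw [← htake xl hxlmem, h, List.take_append_of_le_length (le_of_eq hb.2.symm)]
      exact List.take_of_length_le (le_of_eq hb.2)
  by_cases haO : a ∈ O
  · by_cases hbO : b ∈ O
    · exact Or.inr (Or.inr (Or.inr (Or.inr ⟨c, hcroot, hsp, haO, hbO⟩)))
    · rcases hB with h | h
      · exact absurd h hbO
      · exact Or.inr (Or.inr (Or.inr (Or.inl ⟨by rw [← h]; exact hsp, haO⟩)))
  · rcases hA with h | h
    · exact absurd h haO
    · rcases hB with hbO | hcb
      · exact Or.inr (Or.inr (Or.inl ⟨by rw [← h]; exact hsp, hbO⟩))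
      · exact Or.inr (Or.inl ⟨by rw [← h]; exact hsp, by rw [← hcb, h]⟩)
end

section
/- In a quasi-forest, every path starting from a root is decomposable: there exist indices 1 = i₁ < i₂ < … < i_k = |ρ| such that each segment ρ_{i_j}…ρ_{i_{j+1}} is a basic path, where the basic paths are: direct paths (two roots connected by an edge), a-inner paths (root a followed by descendants of a), a-roundtrips (root a, descendants of a, then a again), (a,o)-inout paths (a-inner path followed by a nominal root o), (a,o)-outin paths (reverses of inouts), (a,o)-inner paths (nominal root o followed by descendants of a), and (a,o,o')-bypass paths (nominal root o, then descendants of some root a, then nominal root o'). -/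
/-- The segment of the path `ρ` from position `s` to position `t` is a basic
path: direct, inner, roundtrip, inout, outin, nominal-inner, or bypass. -/
def IsBasicSeg (F O : Set (List ℕ)) (ρ : ℕ → List ℕ) (s t : ℕ) : Prop :=
  s < t ∧ (
    -- direct
    (t = s + 1 ∧ ρ s ∈ RootsSet F ∧ ρ t ∈ RootsSet F) ∨
    -- a-inner
    (ρ s ∈ RootsSet F ∧ ∀ i, s < i → i ≤ t → StrictPrefix (ρ s) (ρ i)) ∨
    -- a-roundtrip
    (ρ s ∈ RootsSet F ∧ ρ t = ρ s ∧
      ∀ i, s < i → i < t → StrictPrefix (ρ s) (ρ i)) ∨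
    -- (a,o)-inout
    (ρ s ∈ RootsSet F ∧ ρ t ∈ O ∧
      ∀ i, s < i → i < t → StrictPrefix (ρ s) (ρ i)) ∨
    -- (a,o)-outin
    (ρ s ∈ O ∧ ρ t ∈ RootsSet F ∧
      ∀ i, s < i → i < t → StrictPrefix (ρ t) (ρ i)) ∨
    -- (a,o)-inner
    (ρ s ∈ O ∧ ∃ a ∈ RootsSet F, ∀ i, s < i → i ≤ t → StrictPrefix a (ρ i)) ∨
    -- (a,o,o')-bypass
    (ρ s ∈ O ∧ ρ t ∈ O ∧
      ∃ a ∈ RootsSet F, ∀ i, s < i → i < t → StrictPrefix a (ρ i)))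

private lemma take_one_root {F : Set (List ℕ)} (hF : NForest F) {w : List ℕ}
    (hw : w ∈ F) (hlen : 2 ≤ w.length) :
    w.take 1 ∈ RootsSet F ∧ StrictPrefix (w.take 1) w := by
  have hpre : w.take 1 <+: w := List.take_prefix 1 w
  have hlen1 : (w.take 1).length = 1 := by
    rw [List.length_take]; omega
  have hne : w.take 1 ≠ [] := by
    intro h; rw [h] at hlen1; simp at hlen1
  have hmemF : w.take 1 ∈ F := hF.2 w hw _ hne hpre
  refine ⟨⟨hmemF, hlen1⟩, hpre, ?_⟩
  intro h; rw [h] at hlen1; omega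

private lemma key_step {F O : Set (List ℕ)} {E : List ℕ → List ℕ → Prop}
    (hF : NForest F) (hO : O ⊆ RootsSet F) (hE : EdgeCond F O E)
    {K : ℕ} {ρ : ℕ → List ℕ}
    (hmem : ∀ i ≤ K, ρ i ∈ F)
    (hpath : ∀ i < K, E (ρ i) (ρ (i + 1)))
    {s : ℕ} (hs : s < K) (hroot : ρ s ∈ RootsSet F) :
    ∃ t, s < t ∧ t ≤ K ∧ IsBasicSeg F O ρ s t ∧ (t = K ∨ ρ t ∈ RootsSet F) := by
  classical
  by_cases h1 : ρ (s + 1) ∈ RootsSet F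
  · exact ⟨s + 1, by omega, by omega, ⟨by omega, Or.inl ⟨rfl, hroot, h1⟩⟩, Or.inr h1⟩
  · have hs1F : ρ (s + 1) ∈ F := hmem _ (by omega)
    have hs1ne : ρ (s + 1) ≠ [] := hF.1 _ hs1F
    have hs1len : 2 ≤ (ρ (s + 1)).length := by
      have hne1 : (ρ (s + 1)).length ≠ 1 := fun h => h1 ⟨hs1F, h⟩
      have hne0 : (ρ (s + 1)).length ≠ 0 := by simpa using hs1ne
      omega
    obtain ⟨haroot, hasp⟩ := take_one_root hF hs1F hs1len
    set a := (ρ (s + 1)).take 1 with ha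
    have hedge := hE _ _ (hmem s (by omega)) hs1F (hpath s hs)
    have hcase : ρ s ∈ O ∨ a = ρ s := by
      rcases hedge with ⟨_, h⟩ | h | h | h | ⟨n, h⟩ | ⟨n, h⟩
      · exact absurd h h1
      · exact Or.inl h
      · exact absurd (hO h) h1
      · exact absurd (h ▸ hroot) h1
      · right
        have hsp : ρ s <+: ρ (s + 1) := ⟨[n], h.symm⟩
        have hlen : (ρ s).length = 1 := hroot.2
        have hp := List.prefix_of_prefix_length_le hasp.1 hsp
          (by rw [haroot.2]; omega)
        exact hp.eq_of_length (by rw [haroot.2, hlen])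
      · exfalso
        have hl := congrArg List.length h
        rw [List.length_append, List.length_singleton, hroot.2] at hl
        omega
    set P : ℕ → Prop := fun t => ∀ i, s < i → i ≤ t → StrictPrefix a (ρ i) with hPdef
    have hPs1 : P (s + 1) := by
      intro i hi1 hi2
      have : i = s + 1 := by omega
      rw [this]; exact hasp
    set t := Nat.findGreatest P K with htdef
    have htK : t ≤ K := Nat.findGreatest_le K
    have hts : s + 1 ≤ t := Nat.le_findGreatest (by omega) hPs1
    have hPt : P t := Nat.findGreatest_spec (m := s + 1) (by omega) hPs1
    by_cases hK : t = K
    · refine ⟨K, by omega, le_refl K, ⟨by omega, ?_⟩, Or.inl rfl⟩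
      rcases hcase with hso | haeq
      · exact Or.inr (Or.inr (Or.inr (Or.inr (Or.inr (Or.inl
          ⟨hso, a, haroot, fun i h1 h2 => hPt i h1 (by omega)⟩)))))
      · refine Or.inr (Or.inl ⟨hroot, fun i h1 h2 => ?_⟩)
        rw [← haeq]; exact hPt i h1 (by omega)
    · have htK' : t < K := lt_of_le_of_ne htK hK
      have hnt1 : ¬ StrictPrefix a (ρ (t + 1)) := by
        intro hsp
        refine Nat.findGreatest_is_greatest (P := P) (n := K) (k := t + 1) (by omega) (by omega) ?_
        intro i h1 h2
        rcases Nat.lt_or_ge i (t + 1) with h | h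
        · exact hPt i h1 (by omega)
        · have : i = t + 1 := by omega
          rw [this]; exact hsp
      have hspt : StrictPrefix a (ρ t) := hPt t (by omega) le_rfl
      have htlen : 2 ≤ (ρ t).length := by
        have hl1 : a.length = 1 := haroot.2
        have hl2 := hspt.1.length_le
        rcases Nat.lt_or_ge 1 (ρ t).length with h | h
        · omega
        · exact absurd (hspt.1.eq_of_length (by omega)) hspt.2
      have htnr : ρ t ∉ RootsSet F := fun h => by have := h.2; omega
      have htnO : ρ t ∉ O := fun h => htnr (hO h)
      have hedge2 := hE _ _ (hmem t (by omega)) (hmem (t + 1) (by omega))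
        (hpath t (by omega))
      rcases hedge2 with ⟨h, _⟩ | h | h | h | ⟨n, h⟩ | ⟨n, h⟩
      · exact absurd h htnr
      · exact absurd h htnO
      · -- ρ (t+1) ∈ O : inout or bypass
        refine ⟨t + 1, by omega, by omega, ⟨by omega, ?_⟩, Or.inr (hO h)⟩
        rcases hcase with hso | haeq
        · exact Or.inr (Or.inr (Or.inr (Or.inr (Or.inr (Or.inr
            ⟨hso, h, a, haroot, fun i h1 h2 => hPt i h1 (by omega)⟩)))))
        · refine Or.inr (Or.inr (Or.inr (Or.inl ⟨hroot, h, fun i h1 h2 => ?_⟩)))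
          rw [← haeq]; exact hPt i h1 (by omega)
      · exfalso; apply hnt1; rw [← h]; exact hspt
      · -- child step down: contradiction with maximality
        exfalso; apply hnt1
        refine ⟨hspt.1.trans ⟨[n], h.symm⟩, ?_⟩
        intro he
        have hl := congrArg List.length he
        rw [h, List.length_append, List.length_singleton, haroot.2] at hl
        omega
      · -- step up to the parent: ρ (t+1) = a
        have ht1ne : ρ (t + 1) ≠ [] := hF.1 _ (hmem (t + 1) (by omega))
        have hpre : ρ (t + 1) <+: ρ t := ⟨[n], h.symm⟩
        have hapre : a <+: ρ (t + 1) := by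
          refine List.prefix_of_prefix_length_le hspt.1 hpre ?_
          have hpos : 1 ≤ (ρ (t + 1)).length := List.length_pos_iff.mpr ht1ne
          rw [haroot.2]; omega
        have haeq2 : a = ρ (t + 1) := by
          by_contra hne
          exact hnt1 ⟨hapre, hne⟩
        have ht1root : ρ (t + 1) ∈ RootsSet F := haeq2 ▸ haroot
        refine ⟨t + 1, by omega, by omega, ⟨by omega, ?_⟩, Or.inr ht1root⟩
        rcases hcase with hso | haeq
        · refine Or.inr (Or.inr (Or.inr (Or.inr (Or.inl
            ⟨hso, ht1root, fun i h1 h2 => ?_⟩))))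
          rw [← haeq2]; exact hPt i h1 (by omega)
        · refine Or.inr (Or.inr (Or.inl ⟨hroot, ?_, fun i h1 h2 => ?_⟩))
          · rw [← haeq2]; exact haeq
          · rw [← haeq]; exact hPt i h1 (by omega)

private lemma trivial_decomp (F O : Set (List ℕ)) (ρ : ℕ → List ℕ) (u : ℕ) :
    ∃ m : ℕ, ∃ idx : Fin (m + 1) → ℕ, StrictMono idx ∧ idx 0 = u ∧
      idx (Fin.last m) = u ∧
      ∀ j : Fin m, IsBasicSeg F O ρ (idx j.castSucc) (idx j.succ) := by
  refine ⟨0, fun _ => u, ?_, rfl, rfl, fun j => j.elim0⟩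
  intro i j hij
  exfalso
  have h1 := Fin.lt_def.mp hij
  have h2 := j.isLt
  omega

private lemma cons_decomp {F O : Set (List ℕ)} {ρ : ℕ → List ℕ} {s t K : ℕ}
    (hb : IsBasicSeg F O ρ s t) {m : ℕ} {idx : Fin (m + 1) → ℕ}
    (hmono : StrictMono idx) (h0 : idx 0 = t) (hlast : idx (Fin.last m) = K)
    (hseg : ∀ j : Fin m, IsBasicSeg F O ρ (idx j.castSucc) (idx j.succ)) :
    ∃ m' : ℕ, ∃ idx' : Fin (m' + 1) → ℕ, StrictMono idx' ∧ idx' 0 = s ∧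
      idx' (Fin.last m') = K ∧
      ∀ j : Fin m', IsBasicSeg F O ρ (idx' j.castSucc) (idx' j.succ) := by
  refine ⟨m + 1, Fin.cons s idx, ?_, ?_, ?_, ?_⟩
  · rw [Fin.strictMono_iff_lt_succ]
    intro i
    induction i using Fin.cases with
    | zero =>
      have e1 : (Fin.cons s idx : Fin (m + 2) → ℕ) (Fin.castSucc 0) = s := by simp
      have e2 : (Fin.cons s idx : Fin (m + 2) → ℕ) (Fin.succ 0) = t := by
        rw [Fin.cons_succ, h0]
      rw [e1, e2]; exact hb.1
    | succ i =>
      rw [← Fin.succ_castSucc, Fin.cons_succ, Fin.cons_succ]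
      exact hmono Fin.castSucc_lt_succ
  · simp
  · have e : Fin.last (m + 1) = (Fin.last m).succ := rfl
    rw [e, Fin.cons_succ, hlast]
  · intro j
    induction j using Fin.cases with
    | zero =>
      have e1 : (Fin.cons s idx : Fin (m + 2) → ℕ) (Fin.castSucc 0) = s := by simp
      have e2 : (Fin.cons s idx : Fin (m + 2) → ℕ) (Fin.succ 0) = t := by
        rw [Fin.cons_succ, h0]
      rw [e1, e2]; exact hb
    | succ i =>
      rw [← Fin.succ_castSucc, Fin.cons_succ, Fin.cons_succ]
      exact hseg i

private lemma decomp {F O : Set (List ℕ)} {E : List ℕ → List ℕ → Prop}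
    (hF : NForest F) (hO : O ⊆ RootsSet F) (hE : EdgeCond F O E)
    {K : ℕ} {ρ : ℕ → List ℕ}
    (hmem : ∀ i ≤ K, ρ i ∈ F)
    (hpath : ∀ i < K, E (ρ i) (ρ (i + 1))) :
    ∀ n s, K - s ≤ n → s ≤ K → ρ s ∈ RootsSet F →
      ∃ m : ℕ, ∃ idx : Fin (m + 1) → ℕ, StrictMono idx ∧ idx 0 = s ∧
        idx (Fin.last m) = K ∧
        ∀ j : Fin m, IsBasicSeg F O ρ (idx j.castSucc) (idx j.succ) := by
  intro n
  induction n with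
  | zero =>
    intro s hn hs _
    have : s = K := by omega
    subst this
    exact trivial_decomp F O ρ s
  | succ n ih =>
    intro s hn hs hroot
    by_cases hc : K - s ≤ n
    · exact ih s hc hs hroot
    · have hsK : s < K := by omega
      obtain ⟨t, hst, htK, hbasic, hor⟩ := key_step hF hO hE hmem hpath hsK hroot
      rcases hor with rfl | htroot
      · obtain ⟨m0, idx0, hm, h0, hl, hsg⟩ := trivial_decomp F O ρ t
        exact cons_decomp hbasic hm h0 hl hsg
      · obtain ⟨m0, idx0, hm, h0, hl, hsg⟩ := ih t (by omega) htK htroot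
        exact cons_decomp hbasic hm h0 hl hsg

/-- Lemma 4 (basic decomposition of paths): in a quasi-forest, every path
starting from a root is decomposable into basic paths. -/
theorem stmt6 (F O : Set (List ℕ)) (E : List ℕ → List ℕ → Prop)
    (hF : NForest F) (hO : O ⊆ RootsSet F) (hE : EdgeCond F O E)
    (k : ℕ) (hk : 1 ≤ k) (ρ : ℕ → List ℕ)
    (hmem : ∀ i < k, ρ i ∈ F)
    (hpath : ∀ i, i + 1 < k → E (ρ i) (ρ (i + 1)))
    (hstart : ρ 0 ∈ RootsSet F) :
    ∃ m : ℕ, ∃ idx : Fin (m + 1) → ℕ,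
      StrictMono idx ∧ idx 0 = 0 ∧ idx (Fin.last m) = k - 1 ∧
      ∀ j : Fin m, IsBasicSeg F O ρ (idx j.castSucc) (idx j.succ) := by
  have hmem' : ∀ i ≤ k - 1, ρ i ∈ F := fun i hi => hmem i (by omega)
  have hpath' : ∀ i < k - 1, E (ρ i) (ρ (i + 1)) := fun i hi => hpath i (by omega)
  exact decomp hF hO hE hmem' hpath' (k - 1) 0 (by omega) (by omega) hstart
end

section
/- Fix a quasi-forest and a relation E on its elements. Suppose every element d that is NOT a root and satisfies ∃A_{q,q'} (i.e., there is an E-path from d realizing the NFA A from state q to q') witnesses this either via a path fully contained in the subtree of d's root, or via an outer path from d to some root r followed by a path from r realizing A from some intermediate state q̂ to q'. If additionally the concepts Reach_{q,q'} hold exactly at the roots satisfying ∃A_{q,q'}, then for every element d: d satisfies ∃A_{q,q'} if and only if d is a root labeled Reach_{q,q'}, or d is a non-root with a nameless realizing path, or d is a non-root with an outer path realizing A from q to some q̂ ending at a root labeled Reach_{q̂,q'}. -/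
/-- One step in an edge-labeled graph synchronized with an NFA transition. -/
def AStep {V Q A : Type} (edge : V → A → V → Prop) (δ : Q → A → Q → Prop) :
    V × Q → V × Q → Prop :=
  fun p p' => ∃ σ, edge p.1 σ p'.1 ∧ δ p.2 σ p'.2

/-- A synchronized step whose target is not a root (nameless step). -/
def NStep {V Q A : Type} (R : Set V) (edge : V → A → V → Prop)
    (δ : Q → A → Q → Prop) : V × Q → V × Q → Prop :=
  fun p p' => AStep edge δ p p' ∧ p'.1 ∉ R

/-- `d` satisfies `∃ A_{q,q'}.⊤`: some path from `d` realises the NFA from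
state `q` to state `q'`. -/
def SatA {V Q A : Type} (edge : V → A → V → Prop) (δ : Q → A → Q → Prop)
    (d : V) (q q' : Q) : Prop :=
  ∃ e : V, Relation.ReflTransGen (AStep edge δ) (d, q) (e, q')

/-- `d` has a nameless realising path (no roots anywhere on the path). -/
def NamelessSat {V Q A : Type} (R : Set V) (edge : V → A → V → Prop)
    (δ : Q → A → Q → Prop) (d : V) (q q' : Q) : Prop :=
  d ∉ R ∧ ∃ e : V, Relation.ReflTransGen (NStep R edge δ) (d, q) (e, q')

/-- There is an outer path from `d` to the root `r`: a nameless path followed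
by a single step into `r`, realising the NFA from `q` to `qh`. -/
def OuterTo {V Q A : Type} (R : Set V) (edge : V → A → V → Prop)
    (δ : Q → A → Q → Prop) (d : V) (q qh : Q) (r : V) : Prop :=
  r ∈ R ∧ ∃ e qe, Relation.ReflTransGen (NStep R edge δ) (d, q) (e, qe) ∧
    AStep edge δ (e, qe) (r, qh)

/-- Lemma 7 (relativisation of automata concepts): if every non-root
satisfying `∃A_{q,q'}` witnesses it via a nameless path or via an outer path
to a root satisfying the remainder, and `Reach` labels exactly the roots
satisfying `∃A_{q,q'}`, then satisfaction of `∃A_{q,q'}` is equivalent to its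
relativisation. -/
theorem stmt7 {V Q A : Type} (R : Set V) (edge : V → A → V → Prop)
    (δ : Q → A → Q → Prop) (Reach : Q → Q → V → Prop)
    (hReach : ∀ (r : V) (q q' : Q), Reach q q' r ↔ (r ∈ R ∧ SatA edge δ r q q'))
    (hdecomp : ∀ (d : V) (q q' : Q), d ∉ R → SatA edge δ d q q' →
      NamelessSat R edge δ d q q' ∨
        ∃ qh r, OuterTo R edge δ d q qh r ∧ SatA edge δ r qh q') :
    ∀ (d : V) (q q' : Q),
      SatA edge δ d q q' ↔
        (d ∈ R ∧ Reach q q' d) ∨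
        (d ∉ R ∧ NamelessSat R edge δ d q q') ∨
        (d ∉ R ∧ ∃ qh r, OuterTo R edge δ d q qh r ∧ Reach qh q' r) := by
  intro d q q'
  constructor
  · intro hsat
    by_cases hd : d ∈ R
    · exact Or.inl ⟨hd, (hReach d q q').2 ⟨hd, hsat⟩⟩
    · rcases hdecomp d q q' hd hsat with h | ⟨qh, r, hout, hsat'⟩
      · exact Or.inr (Or.inl ⟨hd, h⟩)
      · exact Or.inr (Or.inr ⟨hd, qh, r, hout,
          (hReach r qh q').2 ⟨hout.1, hsat'⟩⟩)
  · rintro (⟨hd, hr⟩ | ⟨hd, _, e, hpath⟩ | ⟨hd, qh, r, ⟨hrR, e, qe, hpath, hstep⟩, hr⟩)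
    · exact ((hReach d q q').1 hr).2
    · exact ⟨e, Relation.ReflTransGen.mono (r := NStep R edge δ) (p := AStep edge δ) (fun _ _ h => h.1) _ _ hpath⟩
    · obtain ⟨f, hpath2⟩ := ((hReach r qh q').1 hr).2
      exact ⟨f, ((Relation.ReflTransGen.mono (r := NStep R edge δ) (p := AStep edge δ) (fun _ _ h => h.1) _ _ hpath).tail hstep).trans hpath2⟩
end

section
/- Let A be an NFA with state set Q over an alphabet Σ, and let G be an edge-labeled graph over a vertex set V with a distinguished finite subset R ⊆ V (roots). Let B be the 'guided NFA' on state set Q ∪ Q_skull (a disjoint copy) whose transitions are labeled by fresh 'shortcut' edge labels, where each shortcut label encodes a pair of states of A, and suppose the shortcut-labeled edge relation on R is sound and complete: a shortcut edge labeled (q,q') from root a to root b exists iff there is a basic path in G from a to b realizing A_{q,q'} (with skull-decorated targets for shortcuts whose underlying basic path ends at an unnamed element in the subtree of the target). Then for all q, q' ∈ Q, a root a has a path realizing A_{q,q'} in G if and only if a has a path over shortcut edges realizing B_{q,q'} or B_{q,q'_skull}. -/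
/-- A basic root-to-root segment: a path from root `a` to root `b` whose
interior is unnamed, realising the NFA from `q` to `q'`. -/
def RootSeg {V Q A : Type} (R : Set V) (edge : V → A → V → Prop)
    (δ : Q → A → Q → Prop) (a : V) (q : Q) (b : V) (q' : Q) : Prop :=
  a ∈ R ∧ b ∈ R ∧ ∃ e qe, Relation.ReflTransGen (NStep R edge δ) (a, q) (e, qe) ∧
    AStep edge δ (e, qe) (b, q')

/-- A trailing segment: a path from root `a` realising the NFA from `q` to
`q'` whose elements after `a` are unnamed and which ends at an unnamed
element. -/
def TrailSeg {V Q A : Type} (R : Set V) (edge : V → A → V → Prop)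
    (δ : Q → A → Q → Prop) (a : V) (q q' : Q) : Prop :=
  a ∈ R ∧ ∃ e, e ∉ R ∧ Relation.ReflTransGen (NStep R edge δ) (a, q) (e, q')

/-- One step of the guided NFA `B` over shortcut edges: its states are
`Q ⊕ Q` (the right copy being the skull states, which have no outgoing
transitions). -/
def GStep {V Q : Type} (sc : V → Q → Q → Bool → V → Prop) :
    V × (Q ⊕ Q) → V × (Q ⊕ Q) → Prop := fun p p' =>
  match p, p' with
  | (a, Sum.inl q), (b, Sum.inl q') => sc a q q' false b
  | (a, Sum.inl q), (b, Sum.inr q') => sc a q q' true b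
  | _, _ => False

/-- Lemma 11 (main property of guided automata): if the shortcut edges on the
finite root set are sound and complete for basic segments (skull shortcuts
for segments ending at unnamed elements in the subtree of the target, which
is then a root), then reachability of the original NFA from a root coincides
with reachability of the guided NFA over the shortcut edges. -/
theorem stmt8 {V Q A : Type} (R : Set V) (hRfin : R.Finite)
    (edge : V → A → V → Prop) (δ : Q → A → Q → Prop)
    (sc : V → Q → Q → Bool → V → Prop)
    (hsc_false : ∀ a b q q', sc a q q' false b ↔ RootSeg R edge δ a q b q')
    (hsc_true : ∀ a q q', (∃ b, sc a q q' true b) ↔ TrailSeg R edge δ a q q')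
    (hsc_true_root : ∀ a b q q', sc a q q' true b → b ∈ R) :
    ∀ a ∈ R, ∀ q q' : Q,
      SatA edge δ a q q' ↔
        ∃ (b : V) (x : Q ⊕ Q),
          Relation.ReflTransGen (GStep sc) (a, Sum.inl q) (b, x) ∧
            (x = Sum.inl q' ∨ x = Sum.inr q') := by
  intro a ha q q'
  constructor
  · rintro ⟨e, hpath⟩
    suffices h : ∀ (p : V × Q) (e : V) (q₁ : Q),
        Relation.ReflTransGen (AStep edge δ) p (e, q₁) →
        ∀ a q, a ∈ R → Relation.ReflTransGen (NStep R edge δ) (a, q) p →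
        ∃ (b : V) (x : Q ⊕ Q),
          Relation.ReflTransGen (GStep sc) (a, Sum.inl q) (b, x) ∧
            (x = Sum.inl q₁ ∨ x = Sum.inr q₁) by
      exact h (a, q) e q' hpath a q ha Relation.ReflTransGen.refl
    intro p e q₁ hpath
    induction hpath using Relation.ReflTransGen.head_induction_on with
    | refl =>
      intro a q ha hns
      rcases hns.cases_tail with heq | ⟨c, _, hlast⟩
      · -- the whole path is trivial
        injection heq with h1 h2
        subst h1; subst h2
        exact ⟨_, _, Relation.ReflTransGen.refl, Or.inl rfl⟩
      · -- nonempty NStep path: endpoint unnamed, trailing segment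
        have htr : TrailSeg R edge δ a q q₁ := ⟨ha, e, hlast.2, hns⟩
        obtain ⟨b, hb⟩ := (hsc_true a q q₁).2 htr
        exact ⟨b, Sum.inr q₁,
          Relation.ReflTransGen.single (by exact hb), Or.inr rfl⟩
    | @head p p₁ hstep htail ih =>
      obtain ⟨c0, p0⟩ := p
      obtain ⟨c1, p1⟩ := p₁
      intro a q ha hns
      by_cases hc1 : c1 ∈ R
      · have hrs : RootSeg R edge δ a q c1 p1 := ⟨ha, hc1, c0, p0, hns, hstep⟩
        have hg : GStep sc (a, Sum.inl q) (c1, Sum.inl p1) :=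
          (hsc_false a c1 q p1).2 hrs
        obtain ⟨b, x, hpath', hx⟩ := ih c1 p1 hc1 Relation.ReflTransGen.refl
        exact ⟨b, x, Relation.ReflTransGen.head hg hpath', hx⟩
      · exact ih a q ha (hns.tail ⟨hstep, hc1⟩)
  · rintro ⟨b, x, hg, hx⟩
    suffices h : ∀ (z : V × (Q ⊕ Q)),
        Relation.ReflTransGen (GStep sc) (a, Sum.inl q) z →
        (∀ p, z.2 = Sum.inl p → Relation.ReflTransGen (AStep edge δ) (a, q) (z.1, p)) ∧
        (∀ p, z.2 = Sum.inr p → ∃ c, Relation.ReflTransGen (AStep edge δ) (a, q) (c, p)) by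
      rcases hx with hx | hx
      · exact ⟨b, (h (b, x) hg).1 q' hx⟩
      · exact (h (b, x) hg).2 q' hx
    intro z hg
    induction hg with
    | refl =>
      constructor
      · intro p hp
        obtain rfl := Sum.inl.inj hp
        exact Relation.ReflTransGen.refl
      · intro p hp; exact absurd hp (by simp)
    | tail hg' hstep ih =>
      rename_i pmid pend
      obtain ⟨c0, y⟩ := pmid
      obtain ⟨b', x'⟩ := pend
      match y, x', hstep with
      | Sum.inl p0, Sum.inl p', hstep =>
        have hpre : Relation.ReflTransGen (AStep edge δ) (a, q) (c0, p0) :=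
          ih.1 p0 rfl
        obtain ⟨_, _, e0, qe, hnse, hlast⟩ := (hsc_false c0 b' p0 p').1 hstep
        have hseg : Relation.ReflTransGen (AStep edge δ) (c0, p0) (b', p') :=
          (Relation.ReflTransGen.mono (fun x y (h : NStep R edge δ x y) => h.1) _ _ hnse).tail hlast
        constructor
        · intro p hp
          obtain rfl := Sum.inl.inj hp
          exact hpre.trans hseg
        · intro p hp; exact absurd hp (by simp)
      | Sum.inl p0, Sum.inr p', hstep =>
        have hpre : Relation.ReflTransGen (AStep edge δ) (a, q) (c0, p0) :=
          ih.1 p0 rfl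
        obtain ⟨_, e0, _, hnse⟩ := (hsc_true c0 p0 p').1 ⟨b', hstep⟩
        constructor
        · intro p hp; exact absurd hp (by simp)
        · intro p hp
          obtain rfl := Sum.inr.inj hp
          exact ⟨e0, hpre.trans (Relation.ReflTransGen.mono (fun x y (h : NStep R edge δ x y) => h.1) _ _ hnse)⟩
end

section
/- Let I be a quasi-forest, d a root of I, and r a binary relation on I satisfying the quasi-forest edge condition (every r-pair connects two roots, or has an endpoint that is a nominal root, or is a self-loop or parent-child pair). Then the set of r-successors of d is partitioned into three (pairwise disjoint up to the obvious overlaps) groups: (a) successors that are roots, (b) successors that are children of d, and (c), only if d is a nominal root, successors that are proper descendants of some root other than d or non-child descendants of d. In particular, if d is a root that is not a nominal root, then every r-successor of d is either a root or a child of d. -/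
/-- Localisation of counting: every `r`-successor of a root `d` is a root, a
child of `d`, or (only when `d` is a nominal root) a proper descendant of some
other root, or a non-child proper descendant of `d`.  In particular, if `d`
is not a nominal root then every `r`-successor is a root or a child of `d`. -/
theorem stmt10 (F O : Set (List ℕ)) (r : List ℕ → List ℕ → Prop)
    (hF : NForest F) (hO : O ⊆ RootsSet F) (hE : EdgeCond F O r)
    (d : List ℕ) (hd : d ∈ RootsSet F) :
    (∀ e, e ∈ F → r d e →
      e ∈ RootsSet F ∨ IsChild d e ∨
        (d ∈ O ∧ ((∃ c ∈ RootsSet F, c ≠ d ∧ StrictPrefix c e) ∨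
          (StrictPrefix d e ∧ ¬ IsChild d e)))) ∧
    (d ∉ O → ∀ e, e ∈ F → r d e → e ∈ RootsSet F ∨ IsChild d e) := by
  have main : ∀ e, e ∈ F → r d e →
      e ∈ RootsSet F ∨ IsChild d e ∨
        (d ∈ O ∧ ((∃ c ∈ RootsSet F, c ≠ d ∧ StrictPrefix c e) ∨
          (StrictPrefix d e ∧ ¬ IsChild d e))) := by
    intro e heF hre
    have heN : e ≠ [] := hF.1 e heF
    rcases hE d e hd.1 heF hre with ⟨_, h⟩ | hdO | heO | heq | hc | hc
    · exact Or.inl h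
    · -- d ∈ O : analyse e via its root
      by_cases he1 : e.length = 1
      · exact Or.inl ⟨heF, he1⟩
      by_cases hic : IsChild d e
      · exact Or.inr (Or.inl hic)
      · right; right; refine ⟨hdO, ?_⟩
        obtain ⟨a, t, rfl⟩ := List.exists_cons_of_ne_nil heN
        have hcpre : [a] <+: a :: t := ⟨t, rfl⟩
        have hcF : [a] ∈ F := hF.2 _ heF [a] (by simp) hcpre
        have hcroot : [a] ∈ RootsSet F := ⟨hcF, rfl⟩
        have hne : [a] ≠ a :: t := by
          intro h; apply he1; rw [← h]; rfl
        by_cases hcd : [a] = d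
        · exact Or.inr ⟨⟨hcd ▸ hcpre, hcd ▸ hne⟩, hic⟩
        · exact Or.inl ⟨[a], hcroot, hcd, hcpre, hne⟩
    · exact Or.inl (hO heO)
    · exact Or.inl (heq ▸ hd)
    · exact Or.inr (Or.inl hc)
    · obtain ⟨n, hn⟩ := hc
      have : e = [] := by
        have := hd.2
        rw [hn] at this
        simpa using this
      exact absurd this heN
  exact ⟨main, fun hdnO e heF hre => by
    rcases main e heF hre with h | h | ⟨h, _⟩
    · exact Or.inl h
    · exact Or.inr h
    · exact absurd h hdnO⟩
end

section
/- Let d be a non-nominal root of a quasi-forest with counting decoration: d has exactly c_cl many r-successors among the roots and exactly c_ch many r-successors among its children (and no other r-successors). Then d satisfies the number restriction (≥ n r).⊤, i.e., has at least n r-successors, if and only if c_cl + c_ch ≥ n. -/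
/-- Virtual satisfaction of number restrictions at non-nominal roots: a
non-nominal root `d` with exactly `ccl` `r`-successors among the roots and
exactly `cch` `r`-successors among its children has at least `n`
`r`-successors iff `ccl + cch ≥ n`. -/
theorem stmt11 (F O : Set (List ℕ)) (r : List ℕ → List ℕ → Prop)
    (hF : NForest F) (hO : O ⊆ RootsSet F) (hE : EdgeCond F O r)
    (d : List ℕ) (hd : d ∈ RootsSet F) (hdO : d ∉ O)
    (hsub : ∀ e, r d e → e ∈ F) (hfin : {e | r d e}.Finite)
    (ccl cch n : ℕ)
    (hcl : {e | r d e ∧ e ∈ RootsSet F}.ncard = ccl)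
    (hch : {e | r d e ∧ IsChild d e}.ncard = cch) :
    n ≤ {e | r d e}.ncard ↔ n ≤ ccl + cch := by
  have hdF : d ∈ F := hd.1
  have hsplit : {e | r d e} = {e | r d e ∧ e ∈ RootsSet F} ∪ {e | r d e ∧ IsChild d e} := by
    ext e
    simp only [Set.mem_setOf_eq, Set.mem_union]
    constructor
    · intro hre
      have heF : e ∈ F := hsub e hre
      rcases hE d e hdF heF hre with ⟨_, h⟩ | h | h | h | h | h
      · exact Or.inl ⟨hre, h⟩
      · exact absurd h hdO
      · exact Or.inl ⟨hre, hO h⟩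
      · exact Or.inl ⟨hre, h ▸ hd⟩
      · exact Or.inr ⟨hre, h⟩
      · exfalso
        obtain ⟨m, hm⟩ := h
        have h1 : d.length = e.length + 1 := by simp [hm]
        have he0 : e.length ≠ 0 := fun h => hF.1 e heF (List.length_eq_zero_iff.mp h)
        have h2 : d.length = 1 := hd.2
        omega
    · rintro (⟨h, _⟩ | ⟨h, _⟩) <;> exact h
  have hdisj : Disjoint {e | r d e ∧ e ∈ RootsSet F} {e | r d e ∧ IsChild d e} := by
    rw [Set.disjoint_left]
    rintro e ⟨_, _, hlen⟩ ⟨_, m, hm⟩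
    have : e.length = d.length + 1 := by simp [hm]
    rw [hd.2] at this
    omega
  have h1 : {e | r d e ∧ e ∈ RootsSet F}.Finite :=
    hfin.subset (fun e he => he.1)
  have h2 : {e | r d e ∧ IsChild d e}.Finite :=
    hfin.subset (fun e he => he.1)
  rw [hsplit, Set.ncard_union_eq hdisj h1 h2, hcl, hch]
end

section
/- Let o be a nominal root of a quasi-forest, r a role satisfying the quasi-forest edge condition, and suppose o has exactly c_cl r-successors among the roots, exactly c_ch r-successors among its children, and for each root a exactly c_a r-successors that are proper descendants of a but not children of o. Then o has at least n r-successors if and only if c_cl + c_ch + Σ_a c_a ≥ n. -/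
/-- Virtual satisfaction of number restrictions at nominal roots (Lemma 15):
a nominal root `o` with exactly `ccl` `r`-successors among the roots, exactly
`cch` among its children, and for each root `a` exactly `c a` among the
non-child proper descendants of `a` has at least `n` `r`-successors iff
`ccl + cch + Σ_a c a ≥ n`. -/
theorem stmt12 (F O : Set (List ℕ)) (r : List ℕ → List ℕ → Prop)
    (hF : NForest F) (hO : O ⊆ RootsSet F) (hE : EdgeCond F O r)
    (hRfin : (RootsSet F).Finite)
    (o : List ℕ) (ho : o ∈ O)
    (hsub : ∀ e, r o e → e ∈ F) (hfin : {e | r o e}.Finite)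
    (ccl cch n : ℕ) (c : List ℕ → ℕ)
    (hcl : {e | r o e ∧ e ∈ RootsSet F}.ncard = ccl)
    (hch : {e | r o e ∧ IsChild o e}.ncard = cch)
    (hc : ∀ a ∈ RootsSet F,
      c a = {e | r o e ∧ StrictPrefix a e ∧ ¬ IsChild o e}.ncard) :
    n ≤ {e | r o e}.ncard ↔ n ≤ ccl + cch + ∑ a ∈ hRfin.toFinset, c a := by
  classical
  set T := hfin.toFinset with hT
  have hmemT : ∀ e, e ∈ T ↔ r o e := fun e => hfin.mem_toFinset
  have holen : o.length = 1 := (hO ho).2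
  -- filter versions
  set A := T.filter (fun e => e ∈ RootsSet F) with hA
  set B := T.filter (fun e => IsChild o e) with hB
  set Ca : List ℕ → Finset (List ℕ) :=
    fun a => T.filter (fun e => StrictPrefix a e ∧ ¬ IsChild o e) with hCa
  -- ncard conversions
  have hset : ∀ (P : List ℕ → Prop),
      {e | r o e ∧ P e} = ↑(T.filter (fun e => P e)) := by
    intro P; ext e; simp [hmemT e, and_comm]
  have hAcard : A.card = ccl := by
    rw [← hcl, hset (fun e => e ∈ RootsSet F)]; exact (Set.ncard_coe_finset _).symm
  have hBcard : B.card = cch := by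
    rw [← hch, hset (fun e => IsChild o e)]; exact (Set.ncard_coe_finset _).symm
  have hCcard : ∀ a ∈ RootsSet F, (Ca a).card = c a := by
    intro a ha
    rw [hc a ha, hset (fun e => StrictPrefix a e ∧ ¬ IsChild o e),
      Set.ncard_coe_finset]
    simp only [hCa]
    congr 1
    ext e
    simp
  -- length facts
  have hlenB : ∀ e ∈ B, e.length = 2 := by
    intro e he
    obtain ⟨m, rfl⟩ := (Finset.mem_filter.mp he).2
    simp [holen]
  have hlenC : ∀ a ∈ hRfin.toFinset, ∀ e ∈ Ca a, 2 ≤ e.length ∧ a = e.take 1 := by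
    intro a ha e he
    have ha' : a ∈ RootsSet F := hRfin.mem_toFinset.mp ha
    obtain ⟨⟨hpre, hne⟩, hnc⟩ := (Finset.mem_filter.mp he).2
    have h1 : a = e.take a.length := List.prefix_iff_eq_take.mp hpre
    have hlt : a.length < e.length :=
      lt_of_le_of_ne hpre.length_le (fun h => hne (hpre.eq_of_length h))
    have hl1 : a.length = 1 := ha'.2
    rw [hl1] at h1
    exact ⟨by omega, h1⟩
  -- decomposition
  have hdecomp : T = (A ∪ B) ∪ hRfin.toFinset.biUnion Ca := by
    ext e
    simp only [Finset.mem_union, Finset.mem_biUnion, hA, hB, hCa, Finset.mem_filter]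
    constructor
    · intro he
      have hre : r o e := (hmemT e).mp he
      have heF : e ∈ F := hsub e hre
      have hene : e ≠ [] := hF.1 e heF
      have hepos : 0 < e.length := List.length_pos_iff.mpr hene
      by_cases hroot : e ∈ RootsSet F
      · exact Or.inl (Or.inl ⟨he, hroot⟩)
      by_cases hch : IsChild o e
      · exact Or.inl (Or.inr ⟨he, hch⟩)
      · right
        refine ⟨e.take 1, ?_, he, ⟨⟨List.take_prefix 1 e, ?_⟩, hch⟩⟩
        · rw [Set.Finite.mem_toFinset]
          refine ⟨hF.2 e heF _ ?_ (List.take_prefix 1 e), ?_⟩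
          · exact List.length_pos_iff.mp (by simp; omega)
          · simp; omega
        · intro h
          apply hroot
          refine ⟨heF, ?_⟩
          have := congrArg List.length h
          simp at this; omega
    · rintro ((⟨he, _⟩ | ⟨he, _⟩) | ⟨a, _, he, _⟩) <;> exact he
  -- disjointness
  have hAB : Disjoint A B := by
    rw [Finset.disjoint_left]
    intro e heA heB
    have h1 : e.length = 1 := (Finset.mem_filter.mp heA).2.2
    have h2 := hlenB e heB
    omega
  have hABC : Disjoint (A ∪ B) (hRfin.toFinset.biUnion Ca) := by
    rw [Finset.disjoint_left]
    intro e he heC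
    obtain ⟨a, ha, hea⟩ := Finset.mem_biUnion.mp heC
    have h2 := (hlenC a ha e hea).1
    rcases Finset.mem_union.mp he with h | h
    · have h1 : e.length = 1 := (Finset.mem_filter.mp h).2.2
      omega
    · exact (Finset.mem_filter.mp hea).2.2 (Finset.mem_filter.mp h).2
  have hpair : ∀ a ∈ hRfin.toFinset, ∀ b ∈ hRfin.toFinset, a ≠ b →
      Disjoint (Ca a) (Ca b) := by
    intro a ha b hb hab
    rw [Finset.disjoint_left]
    intro e hea heb
    exact hab ((hlenC a ha e hea).2.trans (hlenC b hb e heb).2.symm)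
  -- count
  have hcount : T.card = ccl + cch + ∑ a ∈ hRfin.toFinset, c a := by
    rw [hdecomp, Finset.card_union_of_disjoint hABC,
      Finset.card_union_of_disjoint hAB, hAcard, hBcard,
      Finset.card_biUnion hpair]
    congr 1
    exact Finset.sum_congr rfl (fun a ha => hCcard a (hRfin.mem_toFinset.mp ha))
  have : {e | r o e}.ncard = T.card := by
    rw [← Set.ncard_coe_finset T, hT, hfin.coe_toFinset]
  rw [this, hcount]
end

section
/- Let I be a quasi-forest and let ρ be a path in I from a root a realizing an NFA A from state q to state q'. Then the subsequence of ρ consisting of all its root elements, say a = d₁, d₂, …, d_m, together with intermediate states q = q₁, q₂, …, q_{m+1} = q' chosen from any accepting run of A on ρ, has the property that each consecutive segment of ρ between d_j and d_{j+1} is a path with unnamed interior realizing A from q_j to q_{j+1}, and any trailing segment after d_m (if ρ does not end at a root) is an a'-inner path realizing A from q_m to q' for the root a' whose subtree contains it. -/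
lemma take1_eq {d e : List ℕ} (hd : d ≠ []) (he : e ≠ [])
    (h : d = e ∨ IsChild d e ∨ IsChild e d) : d.take 1 = e.take 1 := by
  rcases h with rfl | ⟨n, rfl⟩ | ⟨n, rfl⟩
  · rfl
  · cases d with
    | nil => exact absurd rfl hd
    | cons x xs => rfl
  · cases e with
    | nil => exact absurd rfl he
    | cons x xs => rfl

/-- Shortening direction of Lemma 11: a path `ρ` of length `k` from a root,
with labels `lab` realising the NFA `δ` along a run `st`, can be cut at the
subsequence `idx` of its root positions; each consecutive segment has unnamed
interior (and realises the NFA between the run states at the cut points), and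
any trailing segment after the last root position is an inner path contained
in the subtree of a single root. -/
theorem stmt16 {A Q : Type}
    (F O : Set (List ℕ)) (edge : List ℕ → A → List ℕ → Prop)
    (δ : Q → A → Q → Prop)
    (hF : NForest F) (hO : O ⊆ RootsSet F)
    (hE : EdgeCond F O (fun d e => ∃ σ, edge d σ e))
    (k : ℕ) (hk : 1 ≤ k) (ρ : ℕ → List ℕ) (lab : ℕ → A) (st : ℕ → Q)
    (q q' : Q) (hq : st 0 = q) (hq' : st (k - 1) = q')
    (hmem : ∀ i < k, ρ i ∈ F)
    (hstep : ∀ i, i + 1 < k → edge (ρ i) (lab i) (ρ (i + 1)))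
    (hrun : ∀ i, i + 1 < k → δ (st i) (lab i) (st (i + 1)))
    (hstart : ρ 0 ∈ RootsSet F) :
    ∃ m : ℕ, ∃ idx : Fin (m + 1) → ℕ,
      StrictMono idx ∧ idx 0 = 0 ∧ (∀ j, idx j ≤ k - 1) ∧
      (∀ i < k, (ρ i ∈ RootsSet F ↔ ∃ j, idx j = i)) ∧
      (∀ j : Fin m, ∀ i, idx j.castSucc < i → i < idx j.succ →
        ρ i ∉ RootsSet F) ∧
      (idx (Fin.last m) < k - 1 →
        ∃ a ∈ RootsSet F, ∀ i, idx (Fin.last m) < i → i < k →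
          StrictPrefix a (ρ i)) := by
  classical
  set s : Finset ℕ := (Finset.range k).filter (fun i => ρ i ∈ RootsSet F) with hs
  have h0s : 0 ∈ s := by
    simp only [hs, Finset.mem_filter, Finset.mem_range]
    exact ⟨hk, hstart⟩
  have hpos : 0 < s.card := Finset.card_pos.2 ⟨0, h0s⟩
  set m : ℕ := s.card - 1 with hm
  have hcard : s.card = m + 1 := (Nat.succ_pred_eq_of_pos hpos).symm
  set idx : Fin (m + 1) → ℕ := fun j => ((s.orderIsoOfFin hcard) j : ℕ) with hidx
  have hmemidx : ∀ j, idx j ∈ s := fun j => ((s.orderIsoOfFin hcard) j).2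
  have hsmono : StrictMono idx := fun a b hab =>
    Subtype.coe_lt_coe.2 ((s.orderIsoOfFin hcard).strictMono hab)
  have hsurj : ∀ i ∈ s, ∃ j, idx j = i := by
    intro i hi
    refine ⟨(s.orderIsoOfFin hcard).symm ⟨i, hi⟩, ?_⟩
    exact congrArg Subtype.val ((s.orderIsoOfFin hcard).apply_symm_apply ⟨i, hi⟩)
  have hlt : ∀ j, idx j < k := by
    intro j
    have := hmemidx j
    simp only [hs, Finset.mem_filter, Finset.mem_range] at this
    exact this.1
  have hroot : ∀ j, ρ (idx j) ∈ RootsSet F := by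
    intro j
    have := hmemidx j
    simp only [hs, Finset.mem_filter, Finset.mem_range] at this
    exact this.2
  have hmax : ∀ i ∈ s, i ≤ idx (Fin.last m) := by
    intro i hi
    obtain ⟨j, rfl⟩ := hsurj i hi
    exact hsmono.monotone (Fin.le_last j)
  have hnroot : ∀ i, idx (Fin.last m) < i → i < k → ρ i ∉ RootsSet F := by
    intro i h1 h2 hr
    have : i ∈ s := by
      simp only [hs, Finset.mem_filter, Finset.mem_range]
      exact ⟨h2, hr⟩
    exact absurd (hmax i this) (not_le.2 h1)
  refine ⟨m, idx, hsmono, ?_, ?_, ?_, ?_, ?_⟩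
  · obtain ⟨j, hj⟩ := hsurj 0 h0s
    exact Nat.le_antisymm (le_of_le_of_eq (hsmono.monotone (Fin.zero_le j)) hj) (Nat.zero_le _)
  · exact fun j => Nat.le_pred_of_lt (hlt j)
  · intro i hik
    constructor
    · intro hr
      exact hsurj i (by simp only [hs, Finset.mem_filter, Finset.mem_range]; exact ⟨hik, hr⟩)
    · rintro ⟨j, rfl⟩
      exact hroot j
  · intro j i h1 h2 hr
    have hik : i < k := lt_trans h2 (hlt _)
    obtain ⟨j', hj'⟩ := hsurj i
      (by simp only [hs, Finset.mem_filter, Finset.mem_range]; exact ⟨hik, hr⟩)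
    rw [← hj'] at h1 h2
    have l1 := hsmono.lt_iff_lt.1 h1
    have l2 := hsmono.lt_iff_lt.1 h2
    rw [Fin.lt_def] at l1 l2
    simp only [Fin.coe_castSucc, Fin.val_succ] at l1 l2
    omega
  · intro hlast
    set t := idx (Fin.last m) with ht
    have htk : t + 1 < k := by omega
    have hne : ∀ i < k, ρ i ≠ [] := fun i hi => hF.1 _ (hmem i hi)
    set a : List ℕ := (ρ (t + 1)).take 1 with ha
    have hane : a ≠ [] := by
      have := hne (t + 1) htk
      cases hh : ρ (t + 1) with
      | nil => exact absurd hh this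
      | cons x xs => simp [ha, hh]
    have haF : a ∈ F := hF.2 _ (hmem _ htk) _ hane (List.take_prefix _ _)
    have halen : a.length = 1 := by
      have h1 : 1 ≤ (ρ (t + 1)).length := List.length_pos_iff.2 (hne (t + 1) htk)
      simp only [ha, List.length_take]
      omega
    have key : ∀ i, t + 1 ≤ i → i < k → (ρ i).take 1 = a := by
      intro i hti
      induction i, hti using Nat.le_induction with
      | base => intro _; rfl
      | succ i hi IH =>
        intro hik
        have hik' : i < k := by omega
        have hed : ∃ σ, edge (ρ i) σ (ρ (i + 1)) := ⟨lab i, hstep i hik⟩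
        have hcase := hE _ _ (hmem i hik') (hmem (i + 1) hik) hed
        have hni : ρ i ∉ RootsSet F := hnroot i (by omega) hik'
        have hni1 : ρ (i + 1) ∉ RootsSet F := hnroot (i + 1) (by omega) hik
        rcases hcase with ⟨h1, _⟩ | h1 | h1 | h1
        · exact absurd h1 hni
        · exact absurd (hO h1) hni
        · exact absurd (hO h1) hni1
        · rw [← take1_eq (hne i hik') (hne (i + 1) hik) h1]
          exact IH hik'
    refine ⟨a, ⟨haF, halen⟩, ?_⟩
    intro i h1 h2
    have h1' : t + 1 ≤ i := h1
    have hpre : a <+: ρ i := (key i h1' h2) ▸ List.take_prefix _ _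
    refine ⟨hpre, ?_⟩
    intro heq
    apply hnroot i h1 h2
    exact ⟨hmem i h2, by rw [← heq]; exact halen⟩
end
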